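/- Let s ≥ 1, j_G ∈ ℕ, and j ≥ j_G. For k ∈ ℕ let A(k) be the s×s rational matrix with (0-based) entries A(k)[i,i] = 2(2k + i + 1), A(k)[i,i+1] = −(i+1), and 0 otherwise, and let P = A(j−1)·A(j−2)···A(j_G) be the ordered product. Then for every 0-based column index n with 0 ≤ n ≤ s−1, the n-th column sum of P satisfies Σ_{i=0}^{s−1} P[i,n] = (1/2^n) · Σ_{k=0}^{n} C(n, k) · Π_{ℓ=j_G}^{j−1} 2(2ℓ + k + 1). -/

import Mathlib

open Finset

lemma binom_id (n k : ℕ) (h : k < n) :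
    (n.choose k : ℚ) * ((n : ℚ) - k) = (n : ℚ) * ((n - 1).choose k : ℚ) := by
  obtain ⟨m, rfl⟩ : ∃ m, n = m + 1 := ⟨n - 1, by omega⟩
  have h1 : (m + 1).choose k * (m + 1 - k) = (m + 1) * m.choose k := by
    rw [Nat.add_one_mul_choose_eq, Nat.choose_succ_right_eq]
  have h2 := congrArg (Nat.cast : ℕ → ℚ) h1
  push_cast [Nat.cast_sub (by omega : k ≤ m + 1)] at h2
  simpa [Nat.add_sub_cancel] using h2

lemma sum_id (n : ℕ) (c : ℚ) (F : ℕ → ℚ) :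
    (2 * (c + n)) * ∑ k ∈ range (n + 1), (n.choose k : ℚ) * F k
    = (∑ k ∈ range (n + 1), (n.choose k : ℚ) * (2 * (c + k) * F k))
      + 2 * n * ∑ k ∈ range n, ((n - 1).choose k : ℚ) * F k := by
  rw [Finset.mul_sum]
  have step : ∀ k ∈ range (n + 1), (2 * (c + (n:ℚ))) * ((n.choose k : ℚ) * F k)
      = (n.choose k : ℚ) * (2 * (c + k) * F k)
        + 2 * ((n.choose k : ℚ) * ((n : ℚ) - k)) * F k := fun k _ => by ring
  rw [Finset.sum_congr rfl step, Finset.sum_add_distrib]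
  congr 1
  rw [Finset.sum_range_succ]
  simp only [sub_self, mul_zero, zero_mul, add_zero]
  rw [Finset.mul_sum]
  refine Finset.sum_congr rfl fun k hk => ?_
  have hb := binom_id n k (mem_range.mp hk)
  linear_combination 2 * F k * hb

lemma col_sums (s j : ℕ)
    (A : ℕ → Matrix (Fin s) (Fin s) ℚ)
    (hA : ∀ k : ℕ, ∀ i i' : Fin s,
      A k i i' = if (i' : ℕ) = (i : ℕ) then 2 * (2 * (k : ℚ) + (i : ℚ) + 1)
        else if (i' : ℕ) = (i : ℕ) + 1 then -((i : ℚ) + 1) else 0) :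
    ∀ d : ℕ, d ≤ j → ∀ n : Fin s,
      ∑ i : Fin s, (((List.range d).map (fun m => A (j - 1 - m))).prod) i n
      = (1 / 2 ^ (n : ℕ)) * ∑ k ∈ Finset.range ((n : ℕ) + 1), (Nat.choose (n : ℕ) k : ℚ) *
          ∏ ℓ ∈ Finset.Ico (j - d) j, (2 * (2 * (ℓ : ℚ) + (k : ℚ) + 1)) := by
  intro d
  induction d with
  | zero =>
      intro _ n
      simp only [List.range_zero, List.map_nil, List.prod_nil, Nat.sub_zero, Finset.Ico_self,
        Finset.prod_empty, mul_one]
      have h1 : ∑ i : Fin s, (1 : Matrix (Fin s) (Fin s) ℚ) i n = 1 := by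
        simp [Matrix.one_apply]
      rw [h1]
      have hch : ∑ k ∈ range ((n:ℕ)+1), (((n:ℕ).choose k : ℚ)) = 2 ^ (n:ℕ) := by
        exact_mod_cast congrArg (Nat.cast : ℕ → ℚ) (Nat.sum_range_choose (n:ℕ))
      rw [hch]
      field_simp
  | succ d ih =>
      intro hd n
      have hd' : d ≤ j := by omega
      have ha : j - (d+1) = j - 1 - d := by omega
      have ha2 : j - d = (j - 1 - d) + 1 := by omega
      have haj : j - 1 - d < j := by omega
      rw [List.range_succ, List.map_append, List.prod_append]
      simp only [List.map_cons, List.map_nil, List.prod_cons, List.prod_nil, mul_one]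
      rw [ha]
      set a := j - 1 - d with haa
      set Pd := ((List.range d).map (fun m => A (j - 1 - m))).prod with hPd
      set F : ℕ → ℚ := fun k => ∏ ℓ ∈ Finset.Ico (a+1) j, (2 * (2 * (ℓ : ℚ) + (k : ℚ) + 1))
        with hF
      have hW : ∀ m : Fin s, ∑ i : Fin s, Pd i m
          = (1 / 2 ^ (m:ℕ)) * ∑ k ∈ range ((m:ℕ)+1), (((m:ℕ).choose k : ℚ)) * F k := by
        intro m
        rw [ih hd' m, ha2]
      have hsum : ∑ i : Fin s, (Pd * A a) i n
          = ∑ m : Fin s, ((1 / 2 ^ (m:ℕ)) *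
              ∑ k ∈ range ((m:ℕ)+1), (((m:ℕ).choose k : ℚ)) * F k) * A a m n := by
        simp only [Matrix.mul_apply]
        rw [Finset.sum_comm]
        refine Finset.sum_congr rfl fun m _ => ?_
        rw [← Finset.sum_mul, hW m]
      rw [hsum]
      have hprod : ∀ k ∈ range ((n:ℕ)+1), ((Nat.choose (n : ℕ) k : ℚ) *
            ∏ ℓ ∈ Finset.Ico a j, (2 * (2 * (ℓ : ℚ) + (k : ℚ) + 1)))
          = (Nat.choose (n : ℕ) k : ℚ) * (2 * (2 * (a:ℚ) + (k:ℚ) + 1) * F k) := by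
        intro k _
        rw [Finset.prod_eq_prod_Ico_succ_bot haj, hF]
      rw [Finset.sum_congr rfl hprod]
      rcases n with ⟨nv, hlt⟩
      cases nv with
      | zero =>
          rw [Finset.sum_eq_single (⟨0, hlt⟩ : Fin s)]
          · rw [hA]
            simp only [Fin.val_mk, if_pos rfl]
            simp [Fin.val_mk]
            ring
          · intro m _ hm
            have hm0 : (m : ℕ) ≠ 0 := by
              simpa [Fin.ext_iff] using hm
            rw [hA]
            simp only [Fin.val_mk]
            rw [if_neg (by omega), if_neg (by omega), mul_zero]
          · intro h; exact absurd (Finset.mem_univ _) h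
      | succ v =>
          have hvlt : v < s := by omega
          have hA1 : A a (⟨v+1, hlt⟩ : Fin s) (⟨v+1, hlt⟩ : Fin s)
              = 2 * (2 * (a:ℚ) + ((v:ℚ)+1) + 1) := by
            rw [hA]
            simp only [Fin.val_mk, if_pos rfl]
            push_cast
            ring
          have hA2 : A a (⟨v, hvlt⟩ : Fin s) (⟨v+1, hlt⟩ : Fin s) = -((v:ℚ)+1) := by
            rw [hA]
            simp only [Fin.val_mk]
            rw [if_neg (by omega)]
            simp
          have hA0 : ∀ m : Fin s, (m:ℕ) ≠ v+1 → (m:ℕ) ≠ v → A a m (⟨v+1, hlt⟩ : Fin s) = 0 := by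
            intro m h1 h2
            rw [hA]
            simp only [Fin.val_mk]
            rw [if_neg (by omega), if_neg (by omega)]
          have hsplit : ∀ m : Fin s, ((1 / 2 ^ (m:ℕ)) *
                ∑ k ∈ range ((m:ℕ)+1), (((m:ℕ).choose k : ℚ)) * F k) * A a m ⟨v+1, hlt⟩
              = (if m = (⟨v+1, hlt⟩ : Fin s) then
                    ((1 / 2 ^ (v+1)) * ∑ k ∈ range (v+1+1), (((v+1).choose k : ℚ)) * F k)
                      * (2 * (2 * (a:ℚ) + ((v:ℚ)+1) + 1)) else 0)
                + (if m = (⟨v, hvlt⟩ : Fin s) then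
                    ((1 / 2 ^ v) * ∑ k ∈ range (v+1), ((v.choose k : ℚ)) * F k)
                      * (-((v:ℚ)+1)) else 0) := by
            intro m
            rcases eq_or_ne m (⟨v+1, hlt⟩ : Fin s) with rfl | h1
            · rw [hA1, if_pos rfl, if_neg (by simp [Fin.ext_iff]), add_zero]
            · rcases eq_or_ne m (⟨v, hvlt⟩ : Fin s) with rfl | h2
              · rw [hA2, if_neg h1, if_pos rfl, zero_add]
              · rw [hA0 m (by simpa [Fin.ext_iff] using h1) (by simpa [Fin.ext_iff] using h2),
                  mul_zero, if_neg h1, if_neg h2, add_zero]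
          rw [Finset.sum_congr rfl (fun m _ => hsplit m), Finset.sum_add_distrib,
            Finset.sum_ite_eq' univ, Finset.sum_ite_eq' univ]
          simp only [Finset.mem_univ, if_pos]
          have key := sum_id (v+1) (2*(a:ℚ)+1) F
          simp only [Nat.add_sub_cancel] at key
          push_cast at key ⊢
          have hsc : (∑ k ∈ range (v+1+1), (((v+1).choose k : ℚ)) * (2 * ((2*(a:ℚ)+1) + (k:ℚ)) * F k))
              = ∑ k ∈ range (v+1+1), (((v+1).choose k : ℚ)) * (2 * (2 * (a:ℚ) + (k:ℚ) + 1) * F k) :=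
            Finset.sum_congr rfl fun k _ => by ring
          rw [hsc] at key
          linear_combination (1 / 2 ^ (v+1) : ℚ) * key



/-- Column sums of the ordered product `P = A(j-1) ⋯ A(j_G)` of the 4-valent dynamics
matrices: the `n`-th column sum of `P` equals
`2^{-n} ∑_{k=0}^{n} C(n,k) ∏_{ℓ=j_G}^{j-1} 2(2ℓ+k+1)` (0-based indices). -/
theorem ordered_product_column_sums
    (s : ℕ) (hs : 1 ≤ s) (jG j : ℕ) (hj : jG ≤ j)
    (A : ℕ → Matrix (Fin s) (Fin s) ℚ)
    (hA : ∀ k : ℕ, ∀ i i' : Fin s,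
      A k i i' = if (i' : ℕ) = (i : ℕ) then 2 * (2 * (k : ℚ) + (i : ℚ) + 1)
        else if (i' : ℕ) = (i : ℕ) + 1 then -((i : ℚ) + 1) else 0)
    (P : Matrix (Fin s) (Fin s) ℚ)
    (hP : P = ((List.range (j - jG)).map (fun m => A (j - 1 - m))).prod) :
    ∀ n : Fin s, ∑ i : Fin s, P i n =
      (1 / 2 ^ (n : ℕ)) * ∑ k ∈ Finset.range ((n : ℕ) + 1),
        (Nat.choose (n : ℕ) k : ℚ) *
          ∏ ℓ ∈ Finset.Ico jG j, (2 * (2 * (ℓ : ℚ) + (k : ℚ) + 1)) := by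
  intro n
  rw [hP]
  have h := col_sums s j A hA (j - jG) (Nat.sub_le j jG) n
  rwa [Nat.sub_sub_self hj] at h
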